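/- For even n ≥ 2, F_∞(M(n)) ≥ 3^{n/2}: there exists a family of 3^{n/2} pairwise M(n)-different permutations of the vertices of the perfect matching M(n) with blank spaces. -/

import Mathlib

/-- The perfect matching `M(n)` on vertices `Fin n` with edges
`(0,1), (2,3), …` (standing for `(1,2), (3,4), …`). -/
def MatchG (n : ℕ) : SimpleGraph (Fin n) where
  Adj u v := (u : ℕ) / 2 = (v : ℕ) / 2 ∧ u ≠ v
  symm := ⟨fun _ _ h => ⟨h.1.symm, h.2.symm⟩⟩
  loopless := ⟨fun _ h => h.2 rfl⟩

def validPerm {n c : ℕ} (f : Fin c → Option (Fin n)) : Prop :=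
  ∀ v : Fin n, ∃! i, f i = some v

def mDiff {n c : ℕ} (f g : Fin c → Option (Fin n)) : Prop :=
  ∃ i v w, f i = some v ∧ g i = some w ∧ (MatchG n).Adj v w

/-- The family member corresponding to `a : Fin m → Fin 3`: block `k`
occupies positions `3k, 3k+1, 3k+2` and places the pair `(2k, 2k+1)` as a
cyclic shift determined by `a k`. -/
def fam {m : ℕ} (a : Fin m → Fin 3) (i : Fin (m*3)) : Option (Fin (m*2)) :=
  if (i:ℕ) % 3 = (a ⟨(i:ℕ)/3, by have := i.isLt; omega⟩ : ℕ) then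
    some ⟨2*((i:ℕ)/3), by have := i.isLt; omega⟩
  else if (i:ℕ) % 3 = ((a ⟨(i:ℕ)/3, by have := i.isLt; omega⟩ : ℕ) + 1) % 3 then
    some ⟨2*((i:ℕ)/3)+1, by have := i.isLt; omega⟩
  else none

lemma fam_eval {m : ℕ} (a : Fin m → Fin 3) (i : Fin (m*3)) (k : Fin m)
    (hdiv : (i:ℕ)/3 = (k:ℕ)) :
    fam a i = if (i:ℕ) % 3 = (a k : ℕ) then
      some ⟨2*(k:ℕ), by have := k.isLt; omega⟩
    else if (i:ℕ) % 3 = ((a k : ℕ) + 1) % 3 then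
      some ⟨2*(k:ℕ)+1, by have := k.isLt; omega⟩
    else none := by
  simp only [fam, hdiv, Fin.eta]

lemma fam_valid {m : ℕ} (a : Fin m → Fin 3) : validPerm (fam a) := by
  intro v
  have hv := v.isLt
  have hk : (v:ℕ)/2 < m := by omega
  have hj : (a ⟨(v:ℕ)/2, hk⟩ : ℕ) < 3 := (a _).isLt
  have key : ∀ i' : Fin (m*3), fam a i' = some v →
      (i':ℕ)/3 = (v:ℕ)/2 ∧
      (((v:ℕ)%2 = 0 ∧ (i':ℕ)%3 = (a ⟨(v:ℕ)/2, hk⟩ : ℕ)) ∨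
       ((v:ℕ)%2 = 1 ∧ (i':ℕ)%3 = ((a ⟨(v:ℕ)/2, hk⟩ : ℕ) + 1) % 3)) := by
    intro i' h
    have hk' : (i':ℕ)/3 < m := by have := i'.isLt; omega
    rw [fam_eval a i' ⟨(i':ℕ)/3, hk'⟩ rfl] at h
    split_ifs at h with h1 h2
    · have hv2 : 2*((i':ℕ)/3) = (v:ℕ) := congrArg Fin.val (Option.some.inj h)
      have hdiv : (i':ℕ)/3 = (v:ℕ)/2 := by omega
      have he : (⟨(i':ℕ)/3, hk'⟩ : Fin m) = ⟨(v:ℕ)/2, hk⟩ := Fin.ext hdiv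
      rw [he] at h1
      exact ⟨hdiv, Or.inl ⟨by omega, h1⟩⟩
    · have hv2 : 2*((i':ℕ)/3)+1 = (v:ℕ) := congrArg Fin.val (Option.some.inj h)
      have hdiv : (i':ℕ)/3 = (v:ℕ)/2 := by omega
      have he : (⟨(i':ℕ)/3, hk'⟩ : Fin m) = ⟨(v:ℕ)/2, hk⟩ := Fin.ext hdiv
      rw [he] at h2
      exact ⟨hdiv, Or.inr ⟨by omega, h2⟩⟩
  by_cases hp : (v:ℕ) % 2 = 0
  · have hlt : 3*((v:ℕ)/2) + (a ⟨(v:ℕ)/2, hk⟩ : ℕ) < m*3 := by omega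
    have e : fam a ⟨3*((v:ℕ)/2) + (a ⟨(v:ℕ)/2, hk⟩ : ℕ), hlt⟩ = some v := by
      rw [fam_eval a ⟨3*((v:ℕ)/2) + (a ⟨(v:ℕ)/2, hk⟩ : ℕ), hlt⟩ ⟨(v:ℕ)/2, hk⟩
        (by show (3*((v:ℕ)/2) + (a ⟨(v:ℕ)/2, hk⟩ : ℕ))/3 = (v:ℕ)/2; omega)]
      rw [if_pos (by show (3*((v:ℕ)/2) + (a ⟨(v:ℕ)/2, hk⟩ : ℕ))%3 = _; omega)]
      exact congrArg some (Fin.ext (by show 2*((v:ℕ)/2) = (v:ℕ); omega))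
    refine ⟨⟨3*((v:ℕ)/2) + (a ⟨(v:ℕ)/2, hk⟩ : ℕ), hlt⟩, e, ?_⟩
    intro i' h
    obtain ⟨hdiv, hrest⟩ := key i' h
    apply Fin.ext
    show (i':ℕ) = 3*((v:ℕ)/2) + (a ⟨(v:ℕ)/2, hk⟩ : ℕ)
    rcases hrest with ⟨_, hm3⟩ | ⟨hcon, _⟩
    · omega
    · omega
  · have hlt : 3*((v:ℕ)/2) + ((a ⟨(v:ℕ)/2, hk⟩ : ℕ) + 1) % 3 < m*3 := by omega
    have e : fam a ⟨3*((v:ℕ)/2) + ((a ⟨(v:ℕ)/2, hk⟩ : ℕ) + 1) % 3, hlt⟩ = some v := by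
      rw [fam_eval a ⟨3*((v:ℕ)/2) + ((a ⟨(v:ℕ)/2, hk⟩ : ℕ) + 1) % 3, hlt⟩ ⟨(v:ℕ)/2, hk⟩
        (by show (3*((v:ℕ)/2) + ((a ⟨(v:ℕ)/2, hk⟩ : ℕ) + 1) % 3)/3 = (v:ℕ)/2; omega)]
      rw [if_neg (by
        show ¬((3*((v:ℕ)/2) + ((a ⟨(v:ℕ)/2, hk⟩ : ℕ) + 1) % 3)%3 = (a ⟨(v:ℕ)/2, hk⟩ : ℕ))
        omega)]
      rw [if_pos (by show (3*((v:ℕ)/2) + ((a ⟨(v:ℕ)/2, hk⟩ : ℕ) + 1) % 3)%3 = _; omega)]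
      exact congrArg some (Fin.ext (by show 2*((v:ℕ)/2)+1 = (v:ℕ); omega))
    refine ⟨⟨3*((v:ℕ)/2) + ((a ⟨(v:ℕ)/2, hk⟩ : ℕ) + 1) % 3, hlt⟩, e, ?_⟩
    intro i' h
    obtain ⟨hdiv, hrest⟩ := key i' h
    apply Fin.ext
    show (i':ℕ) = 3*((v:ℕ)/2) + ((a ⟨(v:ℕ)/2, hk⟩ : ℕ) + 1) % 3
    rcases hrest with ⟨hcon, _⟩ | ⟨_, hm3⟩
    · omega
    · omega

lemma fam_mdiff {m : ℕ} (a b : Fin m → Fin 3) (hne : a ≠ b) :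
    mDiff (fam a) (fam b) := by
  obtain ⟨k, hk⟩ := Function.ne_iff.mp hne
  have hj : (a k : ℕ) < 3 := (a k).isLt
  have hl : (b k : ℕ) < 3 := (b k).isLt
  have hjl : (a k : ℕ) ≠ (b k : ℕ) := fun h => hk (Fin.ext h)
  have hkm : (k:ℕ) < m := k.isLt
  rcases (by omega : (b k:ℕ) = ((a k:ℕ)+1)%3 ∨ (a k:ℕ) = ((b k:ℕ)+1)%3) with hc | hc
  · have hlt : 3*(k:ℕ) + (b k:ℕ) < m*3 := by omega
    have ea : fam a ⟨3*(k:ℕ) + (b k:ℕ), hlt⟩ = some ⟨2*(k:ℕ)+1, by omega⟩ := by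
      rw [fam_eval a ⟨3*(k:ℕ) + (b k:ℕ), hlt⟩ k (by show (3*(k:ℕ) + (b k:ℕ))/3 = (k:ℕ); omega)]
      rw [if_neg (by show ¬((3*(k:ℕ) + (b k:ℕ))%3 = (a k:ℕ)); omega)]
      rw [if_pos (by show (3*(k:ℕ) + (b k:ℕ))%3 = ((a k:ℕ)+1)%3; omega)]
    have eb : fam b ⟨3*(k:ℕ) + (b k:ℕ), hlt⟩ = some ⟨2*(k:ℕ), by omega⟩ := by
      rw [fam_eval b ⟨3*(k:ℕ) + (b k:ℕ), hlt⟩ k (by show (3*(k:ℕ) + (b k:ℕ))/3 = (k:ℕ); omega)]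
      rw [if_pos (by show (3*(k:ℕ) + (b k:ℕ))%3 = (b k:ℕ); omega)]
    refine ⟨⟨3*(k:ℕ) + (b k:ℕ), hlt⟩, ⟨2*(k:ℕ)+1, by omega⟩, ⟨2*(k:ℕ), by omega⟩,
      ea, eb, ?_, ?_⟩
    · show (2*(k:ℕ)+1)/2 = (2*(k:ℕ))/2
      omega
    · intro h
      have h2 : 2*(k:ℕ)+1 = 2*(k:ℕ) := congrArg Fin.val h
      omega
  · have hlt : 3*(k:ℕ) + (a k:ℕ) < m*3 := by omega
    have ea : fam a ⟨3*(k:ℕ) + (a k:ℕ), hlt⟩ = some ⟨2*(k:ℕ), by omega⟩ := by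
      rw [fam_eval a ⟨3*(k:ℕ) + (a k:ℕ), hlt⟩ k (by show (3*(k:ℕ) + (a k:ℕ))/3 = (k:ℕ); omega)]
      rw [if_pos (by show (3*(k:ℕ) + (a k:ℕ))%3 = (a k:ℕ); omega)]
    have eb : fam b ⟨3*(k:ℕ) + (a k:ℕ), hlt⟩ = some ⟨2*(k:ℕ)+1, by omega⟩ := by
      rw [fam_eval b ⟨3*(k:ℕ) + (a k:ℕ), hlt⟩ k (by show (3*(k:ℕ) + (a k:ℕ))/3 = (k:ℕ); omega)]
      rw [if_neg (by show ¬((3*(k:ℕ) + (a k:ℕ))%3 = (b k:ℕ)); omega)]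
      rw [if_pos (by show (3*(k:ℕ) + (a k:ℕ))%3 = ((b k:ℕ)+1)%3; omega)]
    refine ⟨⟨3*(k:ℕ) + (a k:ℕ), hlt⟩, ⟨2*(k:ℕ), by omega⟩, ⟨2*(k:ℕ)+1, by omega⟩,
      ea, eb, ?_, ?_⟩
    · show (2*(k:ℕ))/2 = (2*(k:ℕ)+1)/2
      omega
    · intro h
      have h2 : 2*(k:ℕ) = 2*(k:ℕ)+1 := congrArg Fin.val h
      omega

lemma fam_injective {m : ℕ} : Function.Injective (fam (m := m)) := by
  intro a b h
  by_contra hne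
  obtain ⟨i, v, w, hv, hw, hadj⟩ := fam_mdiff a b hne
  rw [h] at hv
  rw [hv] at hw
  exact hadj.2 (Option.some.inj hw)

lemma key (m : ℕ) : ∃ (S : Finset (Fin (m*3) → Option (Fin (m*2)))),
    (∀ f ∈ S, validPerm f) ∧
    (S : Set (Fin (m*3) → Option (Fin (m*2)))).Pairwise mDiff ∧
    S.card = 3 ^ m := by
  refine ⟨Finset.univ.image fam, ?_, ?_, ?_⟩
  · intro f hf
    obtain ⟨a, _, rfl⟩ := Finset.mem_image.mp hf
    exact fam_valid a
  · intro f hf g hg hfg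
    simp only [Finset.coe_image, Set.mem_image] at hf hg
    obtain ⟨a, _, rfl⟩ := hf
    obtain ⟨b, _, rfl⟩ := hg
    exact fam_mdiff a b (fun h => hfg (congrArg fam h))
  · rw [Finset.card_image_of_injective _ fam_injective, Finset.card_univ]
    simp [Fintype.card_fun]

/-- `F_∞(M(n)) ≥ 3^{n/2}`: there is a family of `3^{n/2}` pairwise
`M(n)`-different permutations of the vertices of `M(n)` with blank spaces. -/
theorem stmt19 (n : ℕ) (hn : Even n) (h2 : 2 ≤ n) :
    ∃ (c : ℕ) (S : Finset (Fin c → Option (Fin n))),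
      (∀ f ∈ S, validPerm f) ∧
      (S : Set (Fin c → Option (Fin n))).Pairwise mDiff ∧
      S.card = 3 ^ (n / 2) := by
  obtain ⟨m, rfl⟩ := hn
  have h1 : (m + m) / 2 = m := by omega
  have hmm : m + m = m * 2 := by ring
  rw [h1, hmm]
  obtain ⟨S, hS1, hS2, hS3⟩ := key m
  exact ⟨m*3, S, hS1, hS2, hS3⟩
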